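/- Let S be nearly epsilon-strongly G-graded and I an ideal of S_e. Then: (a) I S_y = S_y I^y and S_{y^{-1}} I = I^y S_{y^{-1}} for every y ∈ G; (b) if H is a subgroup of G and I is H-invariant, then I S_y = S_y I for every y ∈ H. -/

import Mathlib

open Pointwise

/-- The product `UV` of two subsets of a ring: the additive subgroup consisting of all
finite sums of products `u * v` with `u ∈ U`, `v ∈ V`. -/
def setProd {S : Type*} [NonUnitalRing S] (U V : Set S) : AddSubgroup S :=
  AddSubgroup.closure (U * V)

/-- For a `G`-graded ring with components `𝒮` and a subset `I ⊆ S`, the subset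
`I^x := S_{x⁻¹} I S_x` (finite sums of triple products). -/
def gradedConj {G : Type*} [Group G] {S : Type*} [NonUnitalRing S]
    (𝒮 : G → AddSubgroup S) (I : Set S) (x : G) : AddSubgroup S :=
  setProd ((setProd (𝒮 x⁻¹ : Set S) I : AddSubgroup S) : Set S) (𝒮 x : Set S)

/-- `I` is a (two-sided) ideal of the subring `T` of `S`. -/
def IsIdealOfComponent {S : Type*} [NonUnitalRing S] (T : AddSubgroup S)
    (I : AddSubgroup S) : Prop :=
  I ≤ T ∧ ∀ a ∈ T, ∀ b ∈ I, a * b ∈ I ∧ b * a ∈ I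

section Aux

variable {S : Type*} [NonUnitalRing S]

lemma mem_setProd_of {U V : Set S} {u v : S} (hu : u ∈ U) (hv : v ∈ V) :
    u * v ∈ setProd U V :=
  AddSubgroup.subset_closure (Set.mul_mem_mul hu hv)

lemma setProd_le {U V : Set S} {P : AddSubgroup S}
    (h : ∀ u ∈ U, ∀ v ∈ V, u * v ∈ P) : setProd U V ≤ P := by
  rw [setProd, AddSubgroup.closure_le]
  rintro _ ⟨u, hu, v, hv, rfl⟩
  exact h u hu v hv

lemma setProd_mono {U U' V V' : Set S} (hU : U ⊆ U') (hV : V ⊆ V') :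
    setProd U V ≤ setProd U' V' :=
  setProd_le fun u hu v hv => mem_setProd_of (hU hu) (hV hv)

/-- multiplying an element of a closure on the right by a fixed element. -/
lemma closure_mul_mem {X : Set S} {P : AddSubgroup S} {t c : S}
    (ht : t ∈ AddSubgroup.closure X) (h : ∀ x ∈ X, x * c ∈ P) : t * c ∈ P := by
  induction ht using AddSubgroup.closure_induction with
  | mem x hx => exact h x hx
  | zero => simpa using P.zero_mem
  | add x y _ _ hx hy => rw [add_mul]; exact P.add_mem hx hy
  | neg x _ hx => rw [neg_mul]; exact P.neg_mem hx

/-- multiplying an element of a closure on the left by a fixed element. -/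
lemma mul_closure_mem {X : Set S} {P : AddSubgroup S} {t c : S}
    (ht : t ∈ AddSubgroup.closure X) (h : ∀ x ∈ X, c * x ∈ P) : c * t ∈ P := by
  induction ht using AddSubgroup.closure_induction with
  | mem x hx => exact h x hx
  | zero => simpa using P.zero_mem
  | add x y _ _ hx hy => rw [mul_add]; exact P.add_mem hx hy
  | neg x _ hx => rw [mul_neg]; exact P.neg_mem hx

end Aux

/-- Let `S` be nearly epsilon-strongly `G`-graded and `I` an ideal of `S_e`. Then:
(a) `I S_y = S_y I^y` and `S_{y⁻¹} I = I^y S_{y⁻¹}` for every `y ∈ G`;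
(b) if `H` is a subgroup of `G` and `I` is `H`-invariant, then `I S_y = S_y I` for every
`y ∈ H`. -/
theorem ideal_switch {G : Type*} [Group G] [DecidableEq G]
    {S : Type*} [NonUnitalRing S] (𝒮 : G → AddSubgroup S)
    [DirectSum.Decomposition 𝒮]
    (hmul : ∀ {x y : G} {a b : S}, a ∈ 𝒮 x → b ∈ 𝒮 y → a * b ∈ 𝒮 (x * y))
    (hnes : ∀ x : G, ∀ s ∈ 𝒮 x,
      (∃ ε ∈ setProd (𝒮 x : Set S) (𝒮 x⁻¹ : Set S), ε * s = s) ∧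
      (∃ ε' ∈ setProd (𝒮 x⁻¹ : Set S) (𝒮 x : Set S), s * ε' = s))
    (I : AddSubgroup S) (hI : IsIdealOfComponent (𝒮 (1 : G)) I) :
    (∀ y : G,
      setProd (I : Set S) (𝒮 y : Set S) =
        setProd (𝒮 y : Set S) ((gradedConj 𝒮 (I : Set S) y : AddSubgroup S) : Set S) ∧
      setProd (𝒮 y⁻¹ : Set S) (I : Set S) =
        setProd ((gradedConj 𝒮 (I : Set S) y : AddSubgroup S) : Set S) (𝒮 y⁻¹ : Set S)) ∧
    (∀ H : Subgroup G, (∀ x ∈ H, (gradedConj 𝒮 (I : Set S) x : Set S) ⊆ I) →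
      ∀ y ∈ H, setProd (I : Set S) (𝒮 y : Set S) = setProd (𝒮 y : Set S) (I : Set S)) := by
  -- part (a)
  have partA : ∀ y : G,
      setProd (I : Set S) (𝒮 y : Set S) =
        setProd (𝒮 y : Set S) ((gradedConj 𝒮 (I : Set S) y : AddSubgroup S) : Set S) ∧
      setProd (𝒮 y⁻¹ : Set S) (I : Set S) =
        setProd ((gradedConj 𝒮 (I : Set S) y : AddSubgroup S) : Set S) (𝒮 y⁻¹ : Set S) := by
    intro y
    constructor
    · apply le_antisymm
      · -- I S_y ≤ S_y I^y
        apply setProd_le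
        intro i hi s hs
        have hisy : i * s ∈ 𝒮 y := by
          have := hmul (hI.1 hi) hs
          rwa [one_mul] at this
        obtain ⟨ε, hε, hεs⟩ := (hnes y (i * s) hisy).1
        rw [← hεs]
        refine closure_mul_mem hε ?_
        rintro _ ⟨a, ha, b, hb, rfl⟩
        rw [mul_assoc]
        refine mem_setProd_of ha ?_
        show b * (i * s) ∈ gradedConj 𝒮 (I : Set S) y
        rw [← mul_assoc]
        exact mem_setProd_of (SetLike.mem_coe.2 (mem_setProd_of hb hi)) hs
      · -- S_y I^y ≤ I S_y
        apply setProd_le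
        intro s hs t ht
        refine mul_closure_mem ht ?_
        rintro _ ⟨u, hu, v, hv, rfl⟩
        rw [← mul_assoc]
        refine mem_setProd_of ?_ hv
        show s * u ∈ I
        refine mul_closure_mem hu ?_
        rintro _ ⟨a, ha, b, hb, rfl⟩
        rw [← mul_assoc]
        have hsa : s * a ∈ 𝒮 (1 : G) := by
          have := hmul hs ha
          rwa [mul_inv_cancel] at this
        exact (hI.2 (s * a) hsa b hb).1
    · apply le_antisymm
      · -- S_{y⁻¹} I ≤ I^y S_{y⁻¹}
        apply setProd_le
        intro a ha i hi
        have hai : a * i ∈ 𝒮 y⁻¹ := by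
          have := hmul ha (hI.1 hi)
          rwa [mul_one] at this
        obtain ⟨ε', hε', hε's⟩ := (hnes y⁻¹ (a * i) hai).2
        rw [inv_inv] at hε'
        rw [← hε's]
        refine mul_closure_mem hε' ?_
        rintro _ ⟨c, hc, d, hd, rfl⟩
        rw [← mul_assoc]
        refine mem_setProd_of ?_ hd
        show a * i * c ∈ gradedConj 𝒮 (I : Set S) y
        exact mem_setProd_of (SetLike.mem_coe.2 (mem_setProd_of ha hi)) hc
      · -- I^y S_{y⁻¹} ≤ S_{y⁻¹} I
        apply setProd_le
        intro t ht b hb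
        refine closure_mul_mem ht ?_
        rintro _ ⟨u, hu, v, hv, rfl⟩
        rw [mul_assoc]
        have hvb : v * b ∈ 𝒮 (1 : G) := by
          have := hmul hv hb
          rwa [mul_inv_cancel] at this
        refine closure_mul_mem hu ?_
        rintro _ ⟨a, ha, i, hi, rfl⟩
        rw [mul_assoc]
        exact mem_setProd_of ha (SetLike.mem_coe.2 (hI.2 (v * b) hvb i hi).2)
  refine ⟨partA, ?_⟩
  intro H hinv y hy
  apply le_antisymm
  · calc setProd (I : Set S) (𝒮 y : Set S)
        = setProd (𝒮 y : Set S) ((gradedConj 𝒮 (I : Set S) y : AddSubgroup S) : Set S) :=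
          (partA y).1
      _ ≤ setProd (𝒮 y : Set S) (I : Set S) :=
          setProd_mono subset_rfl (hinv y hy)
  · have h2 := (partA y⁻¹).2
    rw [inv_inv] at h2
    calc setProd (𝒮 y : Set S) (I : Set S)
        = setProd ((gradedConj 𝒮 (I : Set S) y⁻¹ : AddSubgroup S) : Set S) (𝒮 y : Set S) := h2
      _ ≤ setProd (I : Set S) (𝒮 y : Set S) :=
          setProd_mono (hinv y⁻¹ (H.inv_mem hy)) subset_rfl
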